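/- Let h : ℕ₊ × ℕ₊ → ℝ (arguments written (k, c)) be describable, i.e., there exists a finite set F of good real polynomials in the two variables k, c such that for all k, c ∈ ℕ₊ there exists p ∈ F with p(k, c) = h(k, c). Then for every ε > 0 there exist k, c ∈ ℕ₊ such that |h(k, c) − kc/(k+1)| > ε. In particular, h does not uniformly approximate (k, c) ↦ kc/(k+1). -/

import Mathlib

open MvPolynomial

/-- A two-variable real polynomial (variable `0` = k, variable `1` = c) is *good* if
every monomial with positive degree in `c` also has positive degree in `k`. -/
def GoodPoly (p : MvPolynomial (Fin 2) ℝ) : Prop :=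
  ∀ m ∈ p.support, 0 < m 1 → 0 < m 0

open Polynomial Filter in
/-- If `h : ℕ₊ × ℕ₊ → ℝ` is describable, i.e. weakly-described by a finite set of good
polynomials in `k, c`, then `h` does not uniformly approximate `(k, c) ↦ kc/(k+1)`. -/
theorem describable_not_approx_kc_div (h : ℕ → ℕ → ℝ)
    (F : Finset (MvPolynomial (Fin 2) ℝ))
    (hgood : ∀ p ∈ F, GoodPoly p)
    (hdesc : ∀ k c : ℕ, 0 < k → 0 < c →
      ∃ p ∈ F, eval ![(k : ℝ), (c : ℝ)] p = h k c) :
    ∀ ε : ℝ, 0 < ε → ∃ k c : ℕ, 0 < k ∧ 0 < c ∧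
      |h k c - (k : ℝ) * (c : ℝ) / ((k : ℝ) + 1)| > ε := by
  classical
  intro ε hε
  -- `Q p` : view `p` as a polynomial in `c` with coefficients polynomials in `k`
  set Q : MvPolynomial (Fin 2) ℝ → Polynomial (Polynomial ℝ) :=
    fun p => MvPolynomial.aeval ![Polynomial.C Polynomial.X, Polynomial.X] p with hQdef
  -- `g p` : the coefficient of `c` as a polynomial in `k`
  set g : MvPolynomial (Fin 2) ℝ → Polynomial ℝ := fun p => (Q p).coeff 1 with hgdef
  set r : MvPolynomial (Fin 2) ℝ → Polynomial ℝ :=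
    fun p => (Polynomial.X + 1) * g p - Polynomial.X with hrdef
  have hr0 : ∀ p, r p ≠ 0 := by
    intro p hp
    have h1 := congrArg (Polynomial.eval (-1 : ℝ)) hp
    simp [hrdef] at h1
  -- finitely many bad k
  have hS : (⋃ p ∈ F, {x : ℝ | (r p).IsRoot x}).Finite :=
    Set.Finite.biUnion F.finite_toSet fun p _ => Polynomial.finite_setOf_isRoot (hr0 p)
  have hT : ({n : ℕ | ((n : ℝ)) ∈ ⋃ p ∈ F, {x : ℝ | (r p).IsRoot x}} ∪ {0}).Finite := by
    refine Set.Finite.union ?_ (Set.finite_singleton 0)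
    exact hS.preimage (Nat.cast_injective.injOn)
  obtain ⟨k, hk⟩ := hT.infinite_compl.nonempty
  simp only [Set.mem_compl_iff, Set.mem_union, Set.mem_setOf_eq, Set.mem_singleton_iff,
    not_or] at hk
  obtain ⟨hknot, hk0⟩ := hk
  have hkpos : 0 < k := Nat.pos_of_ne_zero hk0
  set a : ℝ := (k : ℝ) with hadef
  have ha1 : a + 1 ≠ 0 := by positivity
  -- specialize k = a
  set f : MvPolynomial (Fin 2) ℝ → Polynomial ℝ :=
    fun p => MvPolynomial.aeval ![Polynomial.C a, Polynomial.X] p with hfdef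
  have hfQ : ∀ p, f p = Polynomial.map (Polynomial.aeval a).toRingHom (Q p) := by
    intro p
    have hcomp : (Polynomial.mapAlgHom (Polynomial.aeval a : Polynomial ℝ →ₐ[ℝ] ℝ)).comp
        (MvPolynomial.aeval ![Polynomial.C Polynomial.X, Polynomial.X]) =
        MvPolynomial.aeval ![Polynomial.C a, Polynomial.X] := by
      rw [MvPolynomial.comp_aeval]
      congr 1
      funext i
      fin_cases i <;> simp [Polynomial.mapAlgHom]
    have := congrArg (fun φ => φ p) hcomp
    simpa [hfdef, hQdef, Polynomial.coe_mapAlgHom] using this.symm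
  have hcoeff : ∀ p, (f p).coeff 1 = (g p).eval a := by
    intro p
    rw [hfQ p, Polynomial.coeff_map]
    simp [hgdef]
  have heval : ∀ p, ∀ b : ℝ, MvPolynomial.eval ![a, b] p = (f p).eval b := by
    intro p b
    have hcomp : (Polynomial.aeval b : Polynomial ℝ →ₐ[ℝ] ℝ).comp
        (MvPolynomial.aeval ![Polynomial.C a, Polynomial.X]) =
        MvPolynomial.aeval ![a, b] := by
      rw [MvPolynomial.comp_aeval]
      congr 1
      funext i
      fin_cases i <;> simp
    have := congrArg (fun φ => φ p) hcomp
    simp only [AlgHom.coe_comp, Function.comp_apply] at this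
    have h2 : (MvPolynomial.eval ![a, b]) p = (MvPolynomial.aeval ![a, b]) p := by
      rw [MvPolynomial.aeval_def, Algebra.algebraMap_self]; rfl
    rw [h2, ← this]
    simp [hfdef, Polynomial.aeval_def]
  set d : MvPolynomial (Fin 2) ℝ → Polynomial ℝ :=
    fun p => f p - Polynomial.C (a / (a + 1)) * Polynomial.X with hddef
  have hdeg : ∀ p ∈ F, 0 < (d p).degree := by
    intro p hp
    have hc1 : (d p).coeff 1 ≠ 0 := by
      simp only [hddef, Polynomial.coeff_sub, Polynomial.coeff_C_mul, Polynomial.coeff_X_one,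
        mul_one, hcoeff p]
      intro hzero
      have hgp : (g p).eval a = a / (a + 1) := by linarith [sub_eq_zero.mp hzero]
      have : (r p).IsRoot a := by
        simp only [hrdef, Polynomial.IsRoot, Polynomial.eval_sub, Polynomial.eval_mul,
          Polynomial.eval_add, Polynomial.eval_X, Polynomial.eval_one, hgp]
        field_simp
        ring
      exact hknot (Set.mem_biUnion hp this)
    have := Polynomial.le_degree_of_ne_zero hc1
    exact lt_of_lt_of_le (by norm_num) this
  -- each `|d p|` tends to infinity along natural c
  have htt : ∀ p ∈ F, Tendsto (fun c : ℕ => |(d p).eval (c : ℝ)|) atTop atTop := by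
    intro p hp
    exact (Polynomial.abs_tendsto_atTop (d p) (hdeg p hp)).comp tendsto_natCast_atTop_atTop
  have hev : ∀ᶠ c : ℕ in atTop, (∀ p ∈ F, |(d p).eval (c : ℝ)| > ε) ∧ 0 < c := by
    refine Filter.Eventually.and ?_ (Filter.eventually_gt_atTop 0)
    rw [Filter.eventually_all_finset]
    intro p hp
    exact (htt p hp).eventually (Filter.eventually_gt_atTop ε)
  obtain ⟨c, hcall, hc0⟩ := hev.exists
  refine ⟨k, c, hkpos, hc0, ?_⟩
  obtain ⟨p, hpF, hpe⟩ := hdesc k c hkpos hc0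
  have : h k c - (k : ℝ) * (c : ℝ) / ((k : ℝ) + 1) = (d p).eval (c : ℝ) := by
    rw [← hpe, heval p (c : ℝ)]
    simp only [hddef, Polynomial.eval_sub, Polynomial.eval_mul, Polynomial.eval_C,
      Polynomial.eval_X, hadef]
    ring
  rw [this]
  exact hcall p hpF
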